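/- arXiv:2303.12716 — 2 statements merged into one kernel-verified Lean document; each statement's English description precedes it below -/
import Mathlib

section
/- Let α be an irrational number not equivalent to (1+√5)/2 and not equivalent to (1+√17)/2, whose continued fraction expansion has aₙ ∈ {1, 3} for infinitely many n. If for infinitely many n one has a_{n−1} = 3, aₙ = 1, a_{n+1} = 3, then 𝔨(α) ≤ 136/145. -/
open Filter

/-- The tails `αₙ = [aₙ; aₙ₊₁, …]` of the continued fraction of `α`. -/
noncomputable def cfTail (α : ℝ) : ℕ → ℝ
  | 0 => α
  | n + 1 => (Int.fract (cfTail α n))⁻¹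

/-- The partial quotients `aₙ` of the continued fraction of `α`. -/
noncomputable def cfDigit (α : ℝ) (n : ℕ) : ℤ := ⌊cfTail α n⌋

/-- Value `[a; b, c, …]` of a finite continued fraction given by a list. -/
noncomputable def finCF : List ℤ → ℝ
  | [] => 0
  | a :: l => (a : ℝ) + (finCF l)⁻¹

/-- `α*ₙ = [0; aₙ, aₙ₋₁, …, a₁]`. -/
noncomputable def cfStar (α : ℝ) (n : ℕ) : ℝ :=
  (finCF (((List.range' 1 n).reverse).map (cfDigit α)))⁻¹

/-- Numerators `pₙ` of the convergents of `α`. -/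
noncomputable def cfNum (α : ℝ) : ℕ → ℤ
  | 0 => cfDigit α 0
  | 1 => cfDigit α 1 * cfDigit α 0 + 1
  | n + 2 => cfDigit α (n + 2) * cfNum α (n + 1) + cfNum α n

/-- Denominators `qₙ` of the convergents of `α`. -/
noncomputable def cfDen (α : ℝ) : ℕ → ℤ
  | 0 => 1
  | 1 => cfDigit α 1
  | n + 2 => cfDigit α (n + 2) * cfDen α (n + 1) + cfDen α n

/-- The irrationality measure function `ψ_α^[2]` for "second best" approximations. -/
noncomputable def psi2 (α : ℝ) (t : ℝ) : ℝ :=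
  sInf { x : ℝ | ∃ p q : ℤ, 1 ≤ q ∧ (q : ℝ) ≤ t ∧
    (∀ n : ℕ, (p, q) ≠ (cfNum α n, cfDen α n)) ∧ x = |(q : ℝ) * α - (p : ℝ)| }

/-- The Diophantine constant `𝔨(α) = liminf_{t → ∞} t · ψ_α^[2](t)`. -/
noncomputable def kConst (α : ℝ) : ℝ := liminf (fun t : ℝ => t * psi2 α t) atTop

/-- Two numbers are equivalent if the tails of their continued fraction expansions
coincide: `a_{n+k} = b_{m+k}` for all `k ≥ 1`, for some positive integers `m`, `n`. -/
def CFEquiv (α β : ℝ) : Prop :=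
  ∃ n m : ℕ, 0 < n ∧ 0 < m ∧ ∀ k : ℕ, 0 < k → cfDigit α (n + k) = cfDigit β (m + k)

/-- The spectrum `𝕃₂` of values of `𝔨`. -/
def L2 : Set ℝ := { l : ℝ | ∃ α : ℝ, Irrational α ∧ l = kConst α }

/-- `κ¹ₙ(α) = (1 + α*ₙ₋₁)(αₙ − 1)/(αₙ + α*ₙ₋₁)`. -/
noncomputable def kappa1 (α : ℝ) (n : ℕ) : ℝ :=
  (1 + cfStar α (n - 1)) * (cfTail α n - 1) / (cfTail α n + cfStar α (n - 1))

/-- `κ²ₙ(α) = (1 − α*ₙ)(αₙ₊₁ + 1)/(αₙ₊₁ + α*ₙ)`. -/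
noncomputable def kappa2 (α : ℝ) (n : ℕ) : ℝ :=
  (1 - cfStar α n) * (cfTail α (n + 1) + 1) / (cfTail α (n + 1) + cfStar α n)

/-- `κ⁴ₙ(α) = 4/(αₙ + α*ₙ₋₁)`. -/
noncomputable def kappa4 (α : ℝ) (n : ℕ) : ℝ :=
  4 / (cfTail α n + cfStar α (n - 1))

section Basics
variable {α : ℝ}

lemma fract_irrational {x : ℝ} (hx : Irrational x) : Irrational (Int.fract x) := by
  have : Int.fract x = x - ⌊x⌋ := rfl
  rw [this]; exact hx.sub_intCast _

lemma tail_irrational (hα : Irrational α) : ∀ n, Irrational (cfTail α n) := by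
  intro n
  induction n with
  | zero => exact hα
  | succ n ih =>
    rw [show cfTail α (n+1) = (Int.fract (cfTail α n))⁻¹ from rfl]
    exact (fract_irrational ih).inv

lemma fract_tail_pos (hα : Irrational α) (n : ℕ) : 0 < Int.fract (cfTail α n) := by
  rcases lt_or_eq_of_le (Int.fract_nonneg (cfTail α n)) with h | h
  · exact h
  · exact absurd h.symm (fract_irrational (tail_irrational hα n)).ne_zero

lemma tail_succ_gt_one (hα : Irrational α) (n : ℕ) : 1 < cfTail α (n + 1) := by
  have h1 := fract_tail_pos hα n
  have h2 := Int.fract_lt_one (cfTail α n)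
  rw [show cfTail α (n+1) = (Int.fract (cfTail α n))⁻¹ from rfl]
  exact (one_lt_inv₀ h1).mpr h2

lemma digit_succ_pos (hα : Irrational α) (n : ℕ) : 1 ≤ cfDigit α (n + 1) := by
  have := tail_succ_gt_one hα n
  rw [cfDigit, Int.le_floor]
  exact_mod_cast this.le

lemma tail_eq_digit_add_inv (n : ℕ) :
    cfTail α n = (cfDigit α n : ℝ) + (cfTail α (n + 1))⁻¹ := by
  rw [show cfTail α (n+1) = (Int.fract (cfTail α n))⁻¹ from rfl, inv_inv, cfDigit]
  have : Int.fract (cfTail α n) = cfTail α n - ⌊cfTail α n⌋ := rfl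
  rw [this]; ring

lemma digit_lt_tail (hα : Irrational α) (n : ℕ) : (cfDigit α n : ℝ) < cfTail α n := by
  rcases lt_or_eq_of_le (Int.floor_le (cfTail α n)) with h | h
  · exact h
  · exact absurd h.symm ((tail_irrational hα n).ne_int _)

lemma tail_lt_digit_add_one (n : ℕ) : cfTail α n < (cfDigit α n : ℝ) + 1 :=
  Int.lt_floor_add_one _

lemma tail_pos_succ (hα : Irrational α) (n : ℕ) : 0 < cfTail α (n + 1) :=
  lt_trans one_pos (tail_succ_gt_one hα n)

end Basics

section Den
variable {α : ℝ}

lemma cfDen_pos (hα : Irrational α) : ∀ n, 1 ≤ cfDen α n := by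
  intro n
  induction n using Nat.strong_induction_on with
  | _ n ih =>
    match n with
    | 0 => exact le_refl 1
    | 1 => exact digit_succ_pos hα 0
    | n + 2 =>
      have h1 := ih (n+1) (by omega)
      have h0 := ih n (by omega)
      have hd := digit_succ_pos hα (n+1)
      show 1 ≤ cfDigit α (n + 2) * cfDen α (n + 1) + cfDen α n
      nlinarith

lemma cfDen_mono_succ (hα : Irrational α) : ∀ n, cfDen α n ≤ cfDen α (n + 1) := by
  intro n
  match n with
  | 0 => exact digit_succ_pos hα 0
  | n + 1 =>
    have h1 := cfDen_pos hα (n+1)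
    have h0 := cfDen_pos hα n
    have hd := digit_succ_pos hα (n+1)
    show cfDen α (n+1) ≤ cfDigit α (n + 2) * cfDen α (n + 1) + cfDen α n
    nlinarith

lemma cfDen_mono (hα : Irrational α) {m n : ℕ} (h : m ≤ n) : cfDen α m ≤ cfDen α n := by
  induction n with
  | zero => simp_all
  | succ n ih =>
    rcases Nat.lt_or_ge m (n+1) with h' | h'
    · exact le_trans (ih (by omega)) (cfDen_mono_succ hα n)
    · have : m = n + 1 := by omega
      simp [this]

lemma cfDen_strict_succ (hα : Irrational α) (n : ℕ) : cfDen α (n + 1) < cfDen α (n + 2) := by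
  have h1 := cfDen_pos hα (n+1)
  have h0 := cfDen_pos hα n
  have hd := digit_succ_pos hα (n+1)
  show cfDen α (n+1) < cfDigit α (n + 2) * cfDen α (n + 1) + cfDen α n
  nlinarith

lemma cfDen_ge_index (hα : Irrational α) : ∀ n : ℕ, (n : ℤ) ≤ cfDen α (n + 1) := by
  intro n
  induction n with
  | zero => simpa using le_trans zero_le_one (cfDen_pos hα 1)
  | succ n ih =>
    have h := cfDen_strict_succ hα n
    have : cfDen α (n + 1 + 1) = cfDen α (n + 2) := rfl
    omega

/-- between consecutive denominators means not a denominator -/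
lemma ne_cfDen_of_between (hα : Irrational α) {q : ℤ} {k : ℕ}
    (h1 : cfDen α (k + 1) < q) (h2 : q < cfDen α (k + 2)) : ∀ j, q ≠ cfDen α j := by
  intro j hj
  rcases Nat.lt_or_ge j (k + 2) with h | h
  · have : cfDen α j ≤ cfDen α (k + 1) := cfDen_mono hα (by omega)
    omega
  · have : cfDen α (k + 2) ≤ cfDen α j := cfDen_mono hα h
    omega

end Den

section Err
variable {α : ℝ}

/-- The signed error `qₙ α − pₙ`. -/
noncomputable def cfErr (α : ℝ) (n : ℕ) : ℝ := (cfDen α n : ℝ) * α - (cfNum α n : ℝ)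

lemma cfErr_zero : cfErr α 0 = α - (cfDigit α 0 : ℝ) := by
  simp [cfErr, cfDen, cfNum]

lemma cfErr_zero' (hα : Irrational α) : cfErr α 0 = (cfTail α 1)⁻¹ := by
  rw [cfErr_zero]
  rw [show cfTail α 1 = (Int.fract (cfTail α 0))⁻¹ from rfl, inv_inv]
  have : Int.fract (cfTail α 0) = cfTail α 0 - ⌊cfTail α 0⌋ := rfl
  rw [this]
  rfl

lemma cfErr_rec (n : ℕ) :
    cfErr α (n + 2) = (cfDigit α (n + 2) : ℝ) * cfErr α (n + 1) + cfErr α n := by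
  show (cfDen α (n+2) : ℝ) * α - (cfNum α (n+2) : ℝ) = _
  rw [show cfDen α (n+2) = cfDigit α (n + 2) * cfDen α (n + 1) + cfDen α n from rfl,
    show cfNum α (n+2) = cfDigit α (n + 2) * cfNum α (n + 1) + cfNum α n from rfl]
  push_cast
  unfold cfErr
  ring

lemma tail_inv_eq (hα : Irrational α) (n : ℕ) :
    (cfTail α (n + 1))⁻¹ = cfTail α n - (cfDigit α n : ℝ) := by
  have := tail_eq_digit_add_inv (α := α) n
  linarith

/-- Key recurrence: `e_{k+1} = -e_k / α_{k+2}`. -/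
lemma cfErr_succ (hα : Irrational α) : ∀ k, cfErr α (k + 1) = -cfErr α k / cfTail α (k + 2) := by
  intro k
  induction k with
  | zero =>
    have ht1 : (0:ℝ) < cfTail α 1 := tail_pos_succ hα 0
    have ht2 : (0:ℝ) < cfTail α 2 := tail_pos_succ hα 1
    have e0 : cfErr α 0 = (cfTail α 1)⁻¹ := cfErr_zero' hα
    have e1 : cfErr α 1 = (cfDigit α 1 : ℝ) * (α - cfDigit α 0) - 1 := by
      show (cfDen α 1 : ℝ) * α - (cfNum α 1 : ℝ) = _
      rw [show cfDen α 1 = cfDigit α 1 from rfl,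
        show cfNum α 1 = cfDigit α 1 * cfDigit α 0 + 1 from rfl]
      push_cast; ring
    have hfr : α - (cfDigit α 0 : ℝ) = (cfTail α 1)⁻¹ := by
      rw [← cfErr_zero]; exact e0
    have h12 : (cfTail α 2)⁻¹ = cfTail α 1 - (cfDigit α 1 : ℝ) := tail_inv_eq hα 1
    have h12' : (cfTail α 1 - (cfDigit α 1 : ℝ)) * cfTail α 2 = 1 := by
      rw [← h12]; field_simp
    rw [e1, hfr, e0]
    field_simp
    linear_combination (-1 : ℝ) * h12'
  | succ k ih =>
    have ht : (0:ℝ) < cfTail α (k + 3) := tail_pos_succ hα (k+2)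
    have ht2 : (0:ℝ) < cfTail α (k + 2) := tail_pos_succ hα (k+1)
    have hd : (cfTail α (k + 3))⁻¹ = cfTail α (k+2) - (cfDigit α (k+2) : ℝ) := tail_inv_eq hα (k+2)
    have hrec := cfErr_rec (α := α) k
    have hd' : (cfTail α (k+2) - (cfDigit α (k+2) : ℝ)) * cfTail α (k+3) = 1 := by
      rw [← hd]; field_simp
    rw [show k + 1 + 1 = k + 2 from rfl, hrec, ih]
    field_simp
    linear_combination (cfErr α k) * hd'
end Err

section Err2
variable {α : ℝ}

lemma cfErr_sign (hα : Irrational α) : ∀ n, 0 < (-1 : ℝ)^n * cfErr α n := by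
  intro n
  induction n with
  | zero =>
    rw [cfErr_zero' hα]
    simpa using inv_pos.mpr (tail_pos_succ hα 0)
  | succ n ih =>
    rw [cfErr_succ hα n]
    have ht : (0:ℝ) < cfTail α (n + 2) := tail_pos_succ hα (n+1)
    rw [pow_succ]
    have : (-1:ℝ)^n * cfErr α n / cfTail α (n + 2) > 0 := div_pos ih ht
    calc (0:ℝ) < (-1)^n * cfErr α n / cfTail α (n+2) := this
    _ = (-1)^n * -1 * (-cfErr α n / cfTail α (n + 2)) := by ring

lemma abs_cfErr (hα : Irrational α) (n : ℕ) : |cfErr α n| = (-1 : ℝ)^n * cfErr α n := by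
  rcases Nat.even_or_odd n with h | h
  · rw [h.neg_one_pow, one_mul, abs_of_pos]
    have := cfErr_sign hα n
    rwa [h.neg_one_pow, one_mul] at this
  · rw [h.neg_one_pow, neg_one_mul, abs_of_neg]
    have := cfErr_sign hα n
    rw [h.neg_one_pow, neg_one_mul] at this
    linarith

/-- Key formula: `|e_{k+1}| (α_{k+2} q_{k+1} + q_k) = 1`. -/
lemma cfErr_formula (hα : Irrational α) :
    ∀ k, ((-1:ℝ)^(k+1) * cfErr α (k+1)) *
      (cfTail α (k+2) * (cfDen α (k+1) : ℝ) + (cfDen α k : ℝ)) = 1 := by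
  intro k
  induction k with
  | zero =>
    have ht1 : (0:ℝ) < cfTail α 1 := tail_pos_succ hα 0
    have ht2 : (0:ℝ) < cfTail α 2 := tail_pos_succ hα 1
    have e1 : cfErr α 1 = -cfErr α 0 / cfTail α 2 := cfErr_succ hα 0
    have e0 : cfErr α 0 = (cfTail α 1)⁻¹ := cfErr_zero' hα
    have hd : (cfTail α 1 - (cfDigit α 1 : ℝ)) * cfTail α 2 = 1 := by
      rw [← tail_inv_eq hα 1]; field_simp
    rw [e1, e0, show cfDen α 1 = cfDigit α 1 from rfl, show cfDen α 0 = (1:ℤ) from rfl]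
    push_cast
    field_simp
    linear_combination (-1 : ℝ) * hd
  | succ k ih =>
    have ht : (0:ℝ) < cfTail α (k + 3) := tail_pos_succ hα (k+2)
    have ht2 : (0:ℝ) < cfTail α (k + 2) := tail_pos_succ hα (k+1)
    have e2 : cfErr α (k+2) = -cfErr α (k+1) / cfTail α (k+3) := cfErr_succ hα (k+1)
    have hd : (cfTail α (k+2) - (cfDigit α (k+2) : ℝ)) * cfTail α (k+3) = 1 := by
      rw [← tail_inv_eq hα (k+2)]; field_simp
    have hq : (cfDen α (k+2) : ℝ) = (cfDigit α (k + 2) : ℝ) * (cfDen α (k + 1) : ℝ) + (cfDen α k : ℝ) := by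
      rw [show cfDen α (k+2) = cfDigit α (k + 2) * cfDen α (k + 1) + cfDen α k from rfl]
      push_cast; ring
    have hinv : (cfTail α (k+3))⁻¹ = cfTail α (k+2) - (cfDigit α (k+2) : ℝ) := tail_inv_eq hα (k+2)
    have ht3 : cfTail α (k+3) ≠ 0 := ne_of_gt ht
    show (-1:ℝ)^(k+2) * cfErr α (k+2) * (cfTail α (k+3) * (cfDen α (k+2) : ℝ) + (cfDen α (k+1) : ℝ)) = 1
    rw [e2]
    have key : (-1:ℝ)^(k+2) * (-cfErr α (k+1) / cfTail α (k+3)) *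
        (cfTail α (k+3) * (cfDen α (k+2) : ℝ) + (cfDen α (k+1) : ℝ)) =
        (-1:ℝ)^(k+1) * cfErr α (k+1) *
        ((cfDen α (k+2) : ℝ) + (cfDen α (k+1) : ℝ) * (cfTail α (k+3))⁻¹) := by
      field_simp
      ring
    rw [key, hinv, hq]
    linear_combination ih

end Err2

section Psi
variable {α : ℝ}

lemma psi2_nonneg (t : ℝ) : 0 ≤ psi2 α t := by
  apply Real.sInf_nonneg
  rintro x ⟨p, q, -, -, -, rfl⟩
  exact abs_nonneg _

lemma psi2_le_abs {p q : ℤ} {t : ℝ} (hq : 1 ≤ q) (hqt : (q:ℝ) ≤ t)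
    (hne : ∀ n : ℕ, q ≠ cfDen α n) : psi2 α t ≤ |(q:ℝ) * α - (p:ℝ)| := by
  apply csInf_le
  · exact ⟨0, by rintro x ⟨p', q', -, -, -, rfl⟩; exact abs_nonneg _⟩
  · exact ⟨p, q, hq, hqt, fun n h => hne n (congrArg Prod.snd h), rfl⟩

lemma abs_cfErr_eq (hα : Irrational α) (k : ℕ) :
    |cfErr α (k+1)| = (cfTail α (k+2) * (cfDen α (k+1) : ℝ) + (cfDen α k : ℝ))⁻¹ := by
  have h := cfErr_formula hα k
  have habs := abs_cfErr hα (k+1)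
  have hD : (0:ℝ) < cfTail α (k+2) * (cfDen α (k+1) : ℝ) + (cfDen α k : ℝ) := by
    have h1 : (1:ℝ) ≤ (cfDen α (k+1) : ℝ) := by exact_mod_cast cfDen_pos hα (k+1)
    have h0 : (1:ℝ) ≤ (cfDen α k : ℝ) := by exact_mod_cast cfDen_pos hα k
    have ht := tail_pos_succ hα (k+1)
    nlinarith
  rw [habs]
  field_simp
  linarith [h]

/-- Candidate `(2 p_{k+1}, 2 q_{k+1})`. -/
lemma double_bound (hα : Irrational α) (k : ℕ)
    (hd2 : 2 * cfDen α (k+1) < cfDen α (k+2)) :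
    (2 * (cfDen α (k+1) : ℝ)) * psi2 α (2 * (cfDen α (k+1) : ℝ)) ≤
      4 * (cfDen α (k+1) : ℝ) /
        (cfTail α (k+2) * (cfDen α (k+1) : ℝ) + (cfDen α k : ℝ)) := by
  have hq1 : 1 ≤ cfDen α (k+1) := cfDen_pos hα (k+1)
  have hne : ∀ n : ℕ, 2 * cfDen α (k+1) ≠ cfDen α n :=
    ne_cfDen_of_between hα (by omega) hd2
  have h1 : psi2 α (2 * (cfDen α (k+1) : ℝ)) ≤ |((2 * cfDen α (k+1) : ℤ) : ℝ) * α - ((2 * cfNum α (k+1) : ℤ) : ℝ)| := by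
    apply psi2_le_abs (by omega) (by push_cast; linarith) hne
  have h2 : |((2 * cfDen α (k+1) : ℤ) : ℝ) * α - ((2 * cfNum α (k+1) : ℤ) : ℝ)| = 2 * |cfErr α (k+1)| := by
    push_cast
    rw [show (2:ℝ) * (cfDen α (k+1) : ℝ) * α - 2 * (cfNum α (k+1) : ℝ) = 2 * ((cfDen α (k+1):ℝ) * α - (cfNum α (k+1):ℝ)) from by ring]
    rw [abs_mul]
    simp [cfErr]
  rw [h2, abs_cfErr_eq hα k] at h1
  have hq1' : (0:ℝ) < (cfDen α (k+1) : ℝ) := by exact_mod_cast lt_of_lt_of_le one_pos hq1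
  have := mul_le_mul_of_nonneg_left h1 (by positivity : (0:ℝ) ≤ 2 * (cfDen α (k+1) : ℝ))
  calc (2 * (cfDen α (k+1) : ℝ)) * psi2 α (2 * (cfDen α (k+1) : ℝ))
      ≤ (2 * (cfDen α (k+1) : ℝ)) * (2 * (cfTail α (k+2) * (cfDen α (k+1) : ℝ) + (cfDen α k : ℝ))⁻¹) := this
    _ = 4 * (cfDen α (k+1) : ℝ) / (cfTail α (k+2) * (cfDen α (k+1) : ℝ) + (cfDen α k : ℝ)) := by
        field_simp; ring

end Psi

section Sum
variable {α : ℝ}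

lemma cfDen_succ_succ (k : ℕ) :
    cfDen α (k + 2) = cfDigit α (k + 2) * cfDen α (k + 1) + cfDen α k := rfl

/-- Candidate `(p_{k+1} + p_{k+2}, q_{k+1} + q_{k+2})`, needs `a_{k+3} ≥ 2`. -/
lemma sum_bound (hα : Irrational α) (k : ℕ) (hd : 2 ≤ cfDigit α (k+3)) :
    ((cfDen α (k+1) : ℝ) + (cfDen α (k+2) : ℝ)) *
      psi2 α ((cfDen α (k+1) : ℝ) + (cfDen α (k+2) : ℝ)) ≤
    ((cfDen α (k+1) : ℝ) + (cfDen α (k+2) : ℝ)) * (1 - (cfTail α (k+3))⁻¹) /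
      (cfTail α (k+2) * (cfDen α (k+1) : ℝ) + (cfDen α k : ℝ)) := by
  have hq1 : 1 ≤ cfDen α (k+1) := cfDen_pos hα (k+1)
  have hq2 : 1 ≤ cfDen α (k+2) := cfDen_pos hα (k+2)
  have hlt : cfDen α (k+1) + cfDen α (k+2) < cfDen α (k+3) := by
    have : cfDen α (k+3) = cfDigit α (k + 3) * cfDen α (k + 2) + cfDen α (k+1) :=
      cfDen_succ_succ (k+1)
    nlinarith
  have hne : ∀ n : ℕ, cfDen α (k+1) + cfDen α (k+2) ≠ cfDen α n := by
    have h1 : cfDen α (k + 2) < cfDen α (k+1) + cfDen α (k+2) := by omega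
    exact ne_cfDen_of_between hα (k := k + 1) h1 hlt
  have h1 : psi2 α ((cfDen α (k+1) : ℝ) + (cfDen α (k+2) : ℝ)) ≤
      |(((cfDen α (k+1) + cfDen α (k+2) : ℤ)) : ℝ) * α - (((cfNum α (k+1) + cfNum α (k+2) : ℤ)) : ℝ)| := by
    apply psi2_le_abs (by omega) (by push_cast; linarith) hne
  have ht3 : 1 < cfTail α (k+3) := tail_succ_gt_one hα (k+2)
  have habs : |(((cfDen α (k+1) + cfDen α (k+2) : ℤ)) : ℝ) * α - (((cfNum α (k+1) + cfNum α (k+2) : ℤ)) : ℝ)|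
      = |cfErr α (k+1)| * (1 - (cfTail α (k+3))⁻¹) := by
    have he2 : cfErr α (k+2) = -cfErr α (k+1) / cfTail α (k+3) := cfErr_succ hα (k+1)
    have hsum : (((cfDen α (k+1) + cfDen α (k+2) : ℤ)) : ℝ) * α - (((cfNum α (k+1) + cfNum α (k+2) : ℤ)) : ℝ)
        = cfErr α (k+1) + cfErr α (k+2) := by
      push_cast [cfErr]; ring
    rw [hsum, he2]
    have ht3' : cfTail α (k+3) ≠ 0 := by linarith
    rw [show cfErr α (k+1) + -cfErr α (k+1) / cfTail α (k+3)
        = cfErr α (k+1) * (1 - (cfTail α (k+3))⁻¹) from by field_simp; ring]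
    have hlt1 : (cfTail α (k+3))⁻¹ < 1 := by
      rw [inv_lt_one_iff₀]; right; exact ht3
    rw [abs_mul, abs_of_pos (show (0:ℝ) < 1 - (cfTail α (k+3))⁻¹ from by linarith)]
  rw [habs, abs_cfErr_eq hα k] at h1
  have hT : (0:ℝ) < (cfDen α (k+1) : ℝ) + (cfDen α (k+2) : ℝ) := by
    have : (1:ℝ) ≤ (cfDen α (k+1) : ℝ) := by exact_mod_cast hq1
    have : (1:ℝ) ≤ (cfDen α (k+2) : ℝ) := by exact_mod_cast hq2
    linarith
  have := mul_le_mul_of_nonneg_left h1 hT.le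
  calc ((cfDen α (k+1) : ℝ) + (cfDen α (k+2) : ℝ)) * psi2 α ((cfDen α (k+1) : ℝ) + (cfDen α (k+2) : ℝ))
      ≤ ((cfDen α (k+1) : ℝ) + (cfDen α (k+2) : ℝ)) *
        ((cfTail α (k+2) * (cfDen α (k+1) : ℝ) + (cfDen α k : ℝ))⁻¹ * (1 - (cfTail α (k+3))⁻¹)) := this
    _ = ((cfDen α (k+1) : ℝ) + (cfDen α (k+2) : ℝ)) * (1 - (cfTail α (k+3))⁻¹) /
      (cfTail α (k+2) * (cfDen α (k+1) : ℝ) + (cfDen α k : ℝ)) := by ring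

end Sum

section Cases
variable {α : ℝ}

/-- Case 1: a large partial quotient `a_{k+2} ≥ 5` gives a good candidate. -/
lemma case_big (hα : Irrational α) (k : ℕ) (h5 : 5 ≤ cfDigit α (k+2)) :
    ∃ t : ℝ, (cfDen α (k+1) : ℝ) ≤ t ∧ t * psi2 α t ≤ 136/145 := by
  have hq1 : 1 ≤ cfDen α (k+1) := cfDen_pos hα (k+1)
  have hq0 : 1 ≤ cfDen α k := cfDen_pos hα k
  have hd2 : 2 * cfDen α (k+1) < cfDen α (k+2) := by
    have : cfDen α (k+2) = cfDigit α (k + 2) * cfDen α (k + 1) + cfDen α k :=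
      cfDen_succ_succ k
    nlinarith
  refine ⟨2 * (cfDen α (k+1) : ℝ), by push_cast; linarith [(show (1:ℝ) ≤ (cfDen α (k+1):ℝ) by exact_mod_cast hq1)], ?_⟩
  refine le_trans (double_bound hα k hd2) ?_
  have ht : (5:ℝ) < cfTail α (k+2) := by
    have := digit_lt_tail hα (k+2)
    have h5' : (5:ℝ) ≤ (cfDigit α (k+2) : ℝ) := by exact_mod_cast h5
    linarith
  have hQ1 : (1:ℝ) ≤ (cfDen α (k+1) : ℝ) := by exact_mod_cast hq1
  have hQ0 : (1:ℝ) ≤ (cfDen α k : ℝ) := by exact_mod_cast hq0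
  have hD : (0:ℝ) < cfTail α (k+2) * (cfDen α (k+1) : ℝ) + (cfDen α k : ℝ) := by nlinarith
  rw [div_le_iff₀ hD]
  nlinarith [mul_le_mul_of_nonneg_right ht.le (by linarith : (0:ℝ) ≤ (cfDen α (k+1) : ℝ))]

lemma arith_iib {u Q2 Q3 Q4 Q5 : ℝ} (hQ2 : 1 ≤ Q2) (hQ3 : 1 ≤ Q3)
    (hR5 : Q5 = 3*Q4+Q3) (hR4 : Q4 = Q3+Q2) (hbeta : 16*Q2 ≤ 5*Q3)
    (hu1 : 11/50 ≤ u) (hu2 : u ≤ 1/2) :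
    (Q4 + Q5) * (1 - u) ≤ 136/145 * ((3 + u) * Q4 + Q3) := by
  have hh1 : 0 ≤ (u - 11/50) * Q3 := by nlinarith
  have hh2 : 0 ≤ (u - 11/50) * Q2 := by nlinarith
  nlinarith [hh1, hh2, hbeta]

/-- Case 2: the pattern `3,1,3` at positions `m+3, m+4, m+5` with bounded
neighbours gives a good candidate. -/
lemma case_pattern (hα : Irrational α) (m : ℕ)
    (h3 : cfDigit α (m+3) = 3) (h4 : cfDigit α (m+4) = 1) (h5 : cfDigit α (m+5) = 3)
    (hb2 : cfDigit α (m+2) ≤ 4) (hb8 : cfDigit α (m+8) ≤ 4) :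
    ∃ t : ℝ, (cfDen α (m+4) : ℝ) ≤ t ∧ t * psi2 α t ≤ 136/145 := by
  -- integer denominator facts
  have hq1 : 1 ≤ cfDen α (m+1) := cfDen_pos hα (m+1)
  have hq2 : 1 ≤ cfDen α (m+2) := cfDen_pos hα (m+2)
  have hq3 : 1 ≤ cfDen α (m+3) := cfDen_pos hα (m+3)
  have hq4 : 1 ≤ cfDen α (m+4) := cfDen_pos hα (m+4)
  have hq5 : 1 ≤ cfDen α (m+5) := cfDen_pos hα (m+5)
  have hrec3 : cfDen α (m+3) = 3 * cfDen α (m+2) + cfDen α (m+1) := by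
    have := cfDen_succ_succ (α := α) (m+1); rw [h3] at this; exact this
  have hrec4 : cfDen α (m+4) = cfDen α (m+3) + cfDen α (m+2) := by
    have h := cfDen_succ_succ (α := α) (m+2); rw [h4] at h
    have h' : cfDen α (m+4) = 1 * cfDen α (m+3) + cfDen α (m+2) := h
    omega
  have hrec5 : cfDen α (m+5) = 3 * cfDen α (m+4) + cfDen α (m+3) := by
    have := cfDen_succ_succ (α := α) (m+3); rw [h5] at this; exact this
  have hmono : cfDen α m ≤ cfDen α (m+1) := cfDen_mono hα (by omega)
  have hrec2 : cfDen α (m+2) ≤ 5 * cfDen α (m+1) := by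
    have h : cfDen α (m+2) = cfDigit α (m+2) * cfDen α (m+1) + cfDen α m :=
      cfDen_succ_succ (α := α) m
    have h0 : 1 ≤ cfDen α m := cfDen_pos hα m
    have hd : 1 ≤ cfDigit α (m+2) := digit_succ_pos hα (m+1)
    nlinarith
  have hbeta : 16 * cfDen α (m+2) ≤ 5 * cfDen α (m+3) := by omega
  have hbeta4 : 16 * cfDen α (m+4) ≤ 21 * cfDen α (m+3) := by omega
  -- real versions
  have hQ3 : (1:ℝ) ≤ (cfDen α (m+3) : ℝ) := by exact_mod_cast hq3
  have hQ4 : (1:ℝ) ≤ (cfDen α (m+4) : ℝ) := by exact_mod_cast hq4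
  have hQ5 : (1:ℝ) ≤ (cfDen α (m+5) : ℝ) := by exact_mod_cast hq5
  have hRbeta4 : 16 * (cfDen α (m+4) : ℝ) ≤ 21 * (cfDen α (m+3) : ℝ) := by exact_mod_cast hbeta4
  -- tail facts
  have ht6 : 1 < cfTail α (m+6) := tail_succ_gt_one hα (m+5)
  have ht5eq : cfTail α (m+5) = 3 + (cfTail α (m+6))⁻¹ := by
    have := tail_eq_digit_add_inv (α := α) (m+5); rw [h5] at this
    push_cast at this; exact this
  have hupos : 0 < (cfTail α (m+6))⁻¹ := inv_pos.mpr (by linarith)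
  have hd6 : 1 ≤ cfDigit α (m+6) := digit_succ_pos hα (m+5)
  rcases (show cfDigit α (m+6) = 1 ∨ 2 ≤ cfDigit α (m+6) by omega) with h6 | h6
  · -- branch (i): a_{m+6} = 1, candidate 2 q_{m+4}
    -- bound the tails above
    have ht8 : cfTail α (m+8) < 5 := by
      have := tail_lt_digit_add_one (α := α) (m+8)
      have : (cfDigit α (m+8) : ℝ) ≤ 4 := by exact_mod_cast hb8
      have := tail_lt_digit_add_one (α := α) (m+8)
      linarith
    have ht8' : 1 < cfTail α (m+8) := tail_succ_gt_one hα (m+7)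
    have ht7 : 6/5 < cfTail α (m+7) := by
      have heq := tail_eq_digit_add_inv (α := α) (m+7)
      have hd7 : (1:ℝ) ≤ (cfDigit α (m+7) : ℝ) := by exact_mod_cast digit_succ_pos hα (m+6)
      have : (1:ℝ)/5 < (cfTail α (m+8))⁻¹ := by
        rw [show (1:ℝ)/5 = (5:ℝ)⁻¹ by norm_num]
        exact inv_strictAnti₀ (by linarith) ht8
      linarith
    have ht6' : cfTail α (m+6) < 11/6 := by
      have heq := tail_eq_digit_add_inv (α := α) (m+6)
      rw [h6] at heq
      have ht7pos : (0:ℝ) < cfTail α (m+7) := by linarith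
      have : (cfTail α (m+7))⁻¹ < 5/6 := by
        rw [show (5:ℝ)/6 = ((6:ℝ)/5)⁻¹ by norm_num]
        exact inv_strictAnti₀ (by norm_num) ht7
      push_cast at heq
      linarith
    have hu : 6/11 < (cfTail α (m+6))⁻¹ := by
      rw [show (6:ℝ)/11 = ((11:ℝ)/6)⁻¹ by norm_num]
      exact inv_strictAnti₀ (by linarith) ht6'
    have ht5 : 39/11 < cfTail α (m+5) := by rw [ht5eq]; linarith
    have hd2 : 2 * cfDen α (m+4) < cfDen α (m+5) := by omega
    refine ⟨2 * (cfDen α (m+4) : ℝ), by linarith, ?_⟩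
    refine le_trans (double_bound hα (m+3) hd2) ?_
    have hD : (0:ℝ) < cfTail α (m+5) * (cfDen α (m+4) : ℝ) + (cfDen α (m+3) : ℝ) := by nlinarith
    rw [div_le_iff₀ hD]
    nlinarith [mul_le_mul_of_nonneg_right ht5.le (by linarith : (0:ℝ) ≤ (cfDen α (m+4) : ℝ))]
  · -- branch (ii): a_{m+6} ≥ 2
    have ht6ge : (2:ℝ) < cfTail α (m+6) := by
      have := digit_lt_tail hα (m+6)
      have : (2:ℝ) ≤ (cfDigit α (m+6) : ℝ) := by exact_mod_cast h6
      have := digit_lt_tail hα (m+6)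
      linarith
    rcases le_or_gt (50/11 : ℝ) (cfTail α (m+6)) with hu | hu
    · -- (ii-a) candidate 2 q_{m+5}
      have hd2 : 2 * cfDen α (m+5) < cfDen α (m+6) := by
        have h : cfDen α (m+6) = cfDigit α (m+6) * cfDen α (m+5) + cfDen α (m+4) :=
          cfDen_succ_succ (α := α) (m+4)
        nlinarith
      refine ⟨2 * (cfDen α (m+5) : ℝ), ?_, ?_⟩
      · have : (cfDen α (m+4) : ℝ) ≤ (cfDen α (m+5) : ℝ) := by
          exact_mod_cast cfDen_mono hα (by omega : m+4 ≤ m+5)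
        linarith
      refine le_trans (double_bound hα (m+4) hd2) ?_
      have hD : (0:ℝ) < cfTail α (m+6) * (cfDen α (m+5) : ℝ) + (cfDen α (m+4) : ℝ) := by nlinarith
      rw [div_le_iff₀ hD]
      nlinarith [mul_le_mul_of_nonneg_right hu (by linarith : (0:ℝ) ≤ (cfDen α (m+5) : ℝ))]
    · -- (ii-b) candidate q_{m+4} + q_{m+5}
      have hu1 : 11/50 < (cfTail α (m+6))⁻¹ := by
        rw [show (11:ℝ)/50 = ((50:ℝ)/11)⁻¹ by norm_num]
        exact inv_strictAnti₀ (by linarith) hu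
      have hu2 : (cfTail α (m+6))⁻¹ < 1/2 := by
        rw [show (1:ℝ)/2 = ((2:ℝ))⁻¹ by norm_num]
        exact inv_strictAnti₀ (by norm_num) ht6ge
      refine ⟨(cfDen α (m+4) : ℝ) + (cfDen α (m+5) : ℝ), by linarith, ?_⟩
      refine le_trans (sum_bound hα (m+3) h6) ?_
      have hD : (0:ℝ) < cfTail α (m+5) * (cfDen α (m+4) : ℝ) + (cfDen α (m+3) : ℝ) := by
        rw [ht5eq]; nlinarith
      rw [div_le_iff₀ hD, ht5eq]
      have hQ2 : (1:ℝ) ≤ (cfDen α (m+2) : ℝ) := by exact_mod_cast hq2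
      have hR5 : (cfDen α (m+5) : ℝ) = 3 * (cfDen α (m+4) : ℝ) + (cfDen α (m+3) : ℝ) := by
        exact_mod_cast hrec5
      have hR4 : (cfDen α (m+4) : ℝ) = (cfDen α (m+3) : ℝ) + (cfDen α (m+2) : ℝ) := by
        exact_mod_cast hrec4
      have hRbeta : 16 * (cfDen α (m+2) : ℝ) ≤ 5 * (cfDen α (m+3) : ℝ) := by
        exact_mod_cast hbeta
      have := arith_iib hQ2 hQ3 hR5 hR4 hRbeta hu1.le hu2.le
      linarith

end Cases

section Main
variable {α : ℝ}

lemma main_freq (hα : Irrational α)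
    (hpat : ∃ᶠ n in atTop,
      cfDigit α n = 3 ∧ cfDigit α (n + 1) = 1 ∧ cfDigit α (n + 2) = 3) :
    ∀ b : ℝ, ∃ t : ℝ, b ≤ t ∧ t * psi2 α t ≤ 136/145 := by
  intro b
  obtain ⟨B, hB⟩ := exists_nat_ge b
  by_cases hball : ∀ᶠ k in atTop, cfDigit α k ≤ 4
  · obtain ⟨N, hN⟩ := eventually_atTop.mp hball
    obtain ⟨n, hn, hp1, hp2, hp3⟩ := frequently_atTop.mp hpat (N + B + 3)
    obtain ⟨m, rfl⟩ : ∃ m, n = m + 3 := ⟨n - 3, by omega⟩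
    have h3 : cfDigit α (m+3) = 3 := hp1
    have h4 : cfDigit α (m+4) = 1 := hp2
    have h5 : cfDigit α (m+5) = 3 := hp3
    have hb2 : cfDigit α (m+2) ≤ 4 := hN (m+2) (by omega)
    have hb8 : cfDigit α (m+8) ≤ 4 := hN (m+8) (by omega)
    obtain ⟨t, ht, hle⟩ := case_pattern hα m h3 h4 h5 hb2 hb8
    refine ⟨t, ?_, hle⟩
    have h1 : ((m+3 : ℕ) : ℤ) ≤ cfDen α (m+4) := cfDen_ge_index hα (m+3)
    have h2 : (B : ℝ) ≤ ((m+3 : ℕ) : ℝ) := by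
      have : B ≤ m + 3 := by omega
      exact_mod_cast this
    have h3' : ((m+3 : ℕ) : ℝ) ≤ (cfDen α (m+4) : ℝ) := by exact_mod_cast h1
    linarith
  · rw [Filter.not_eventually] at hball
    obtain ⟨k, hk, hk5⟩ := frequently_atTop.mp hball (B + 2)
    obtain ⟨j, rfl⟩ : ∃ j, k = j + 2 := ⟨k - 2, by omega⟩
    have h5 : 5 ≤ cfDigit α (j+2) := by omega
    obtain ⟨t, ht, hle⟩ := case_big hα j h5
    refine ⟨t, ?_, hle⟩
    have h1 : ((j : ℕ) : ℤ) ≤ cfDen α (j+1) := cfDen_ge_index hα j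
    have h2 : (B : ℝ) ≤ ((j : ℕ) : ℝ) := by
      have : B ≤ j := by omega
      exact_mod_cast this
    have h3' : ((j : ℕ) : ℝ) ≤ (cfDen α (j+1) : ℝ) := by exact_mod_cast h1
    linarith


/-- If `α` is irrational, equivalent neither to `(1+√5)/2` nor to `(1+√17)/2`,
with `aₙ ∈ {1, 3}` for infinitely many `n`, and for infinitely many `n` one has
`aₙ₋₁ = 3, aₙ = 1, aₙ₊₁ = 3`, then `𝔨(α) ≤ 136/145`. -/
theorem stmt_15 (α : ℝ) (hα : Irrational α)
    (h5 : ¬ CFEquiv α ((1 + Real.sqrt 5) / 2))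
    (h17 : ¬ CFEquiv α ((1 + Real.sqrt 17) / 2))
    (hmem : ∃ᶠ n in atTop, cfDigit α n = 1 ∨ cfDigit α n = 3)
    (hpat : ∃ᶠ n in atTop,
      cfDigit α n = 3 ∧ cfDigit α (n + 1) = 1 ∧ cfDigit α (n + 2) = 3) :
    kConst α ≤ 136 / 145 := by
  show Filter.liminf (fun t : ℝ => t * psi2 α t) Filter.atTop ≤ 136 / 145
  apply liminf_le_of_frequently_le
  · rw [frequently_atTop]
    intro a
    obtain ⟨t, ht, hle⟩ := main_freq hα hpat a
    exact ⟨t, ht, by norm_num at hle ⊢; linarith⟩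
  · refine ⟨0, ?_⟩
    rw [Filter.eventually_map]
    exact (eventually_ge_atTop (0:ℝ)).mono fun t ht => mul_nonneg ht (psi2_nonneg _)
end Main
end

section
/- Let α be an irrational number not equivalent to (1+√5)/2 and not equivalent to (1+√17)/2, whose continued fraction expansion has aₙ ∈ {1, 3} for infinitely many n. If for infinitely many n one has a_{n−2} = a_{n−1} = 1, aₙ = 3, a_{n+1} = a_{n+2} = a_{n+3} = 1, then 𝔨(α) ≤ 180/187. -/
open Filter

namespace CF16Aux

variable {α : ℝ}

lemma tail_irr (hα : Irrational α) : ∀ n, Irrational (cfTail α n)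
  | 0 => hα
  | n + 1 => by
      have h := tail_irr hα n
      have h2 : Irrational (Int.fract (cfTail α n)) := by
        have := h.sub_intCast ⌊cfTail α n⌋
        rwa [Int.self_sub_floor] at this
      exact h2.inv

lemma fract_pos (hα : Irrational α) (n : ℕ) : 0 < Int.fract (cfTail α n) := by
  rcases (Int.fract_nonneg (cfTail α n)).lt_or_eq with h | h
  · exact h
  · exfalso
    have h0 : cfTail α n = (⌊cfTail α n⌋ : ℝ) := by
      have h1 : cfTail α n - ⌊cfTail α n⌋ = Int.fract (cfTail α n) := Int.self_sub_floor _
      linarith [h.symm]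
    exact (tail_irr hα n).ne_int _ h0

lemma tail_gt_one (hα : Irrational α) (n : ℕ) : 1 < cfTail α (n + 1) := by
  have h0 := fract_pos hα n
  have h1 := Int.fract_lt_one (cfTail α n)
  rw [cfTail]
  exact (one_lt_inv₀ h0).2 h1

lemma tail_eq (hα : Irrational α) (n : ℕ) :
    cfTail α n = (cfDigit α n : ℝ) + (cfTail α (n + 1))⁻¹ := by
  have h2 : (cfTail α (n + 1))⁻¹ = Int.fract (cfTail α n) := by
    rw [cfTail, inv_inv]
  rw [cfDigit, h2, ← Int.self_sub_floor]
  ring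

lemma digit_ge_one (hα : Irrational α) (n : ℕ) : 1 ≤ cfDigit α (n + 1) := by
  have := tail_gt_one hα n
  exact Int.le_floor.mpr (by exact_mod_cast this.le)

lemma tail_lt_digit_add_one (n : ℕ) : cfTail α n < (cfDigit α n : ℝ) + 1 :=
  Int.lt_floor_add_one _

lemma digit_lt_tail (hα : Irrational α) (n : ℕ) : (cfDigit α n : ℝ) < cfTail α n :=
  lt_of_le_of_ne (Int.floor_le _) fun h => (tail_irr hα n).ne_int _ h.symm

lemma den_ge_one (hα : Irrational α) : ∀ n, 1 ≤ cfDen α n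
  | 0 => le_refl 1
  | 1 => digit_ge_one hα 0
  | n + 2 => by
      have h1 := den_ge_one hα (n + 1)
      have h2 := den_ge_one hα n
      have h3 := digit_ge_one hα (n + 1)
      show 1 ≤ cfDigit α (n + 2) * cfDen α (n + 1) + cfDen α n
      nlinarith

lemma den_mono (hα : Irrational α) : ∀ n, cfDen α n ≤ cfDen α (n + 1)
  | 0 => digit_ge_one hα 0
  | n + 1 => by
      have h1 := den_ge_one hα (n + 1)
      have h2 := den_ge_one hα n
      have h3 := digit_ge_one hα (n + 1)
      show cfDen α (n + 1) ≤ cfDigit α (n + 2) * cfDen α (n + 1) + cfDen α n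
      nlinarith

lemma den_ge_idx (hα : Irrational α) (n : ℕ) : (n : ℤ) ≤ cfDen α n := by
  induction n using Nat.twoStepInduction with
  | zero => norm_num [cfDen]
  | one => simpa [cfDen] using digit_ge_one hα 0
  | more n ih1 ih2 =>
      have h2 := den_ge_one hα n
      have h3 := digit_ge_one hα (n + 1)
      have h4 := den_ge_one hα (n + 1)
      show ((n : ℕ) + 2 : ℤ) ≤ cfDigit α (n + 2) * cfDen α (n + 1) + cfDen α n
      push_cast at ih2 ⊢
      have h5 : cfDen α (n + 1) ≤ cfDigit α (n + 2) * cfDen α (n + 1) :=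
        le_mul_of_one_le_left (by linarith) h3
      linarith

lemma det (hα : Irrational α) :
    ∀ n, cfNum α (n + 1) * cfDen α n - cfNum α n * cfDen α (n + 1) = (-1) ^ n
  | 0 => by simp [cfNum, cfDen]; ring
  | n + 1 => by
      have h := det hα n
      show (cfDigit α (n + 2) * cfNum α (n + 1) + cfNum α n) * cfDen α (n + 1) -
        cfNum α (n + 1) * (cfDigit α (n + 2) * cfDen α (n + 1) + cfDen α n) = (-1) ^ (n + 1)
      rw [pow_succ]
      linear_combination (-1 : ℤ) * h

noncomputable def cfDD (α : ℝ) (n : ℕ) : ℝ := (cfDen α n : ℝ) * α - (cfNum α n : ℝ)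

lemma cfD_rel (hα : Irrational α) : ∀ n, cfTail α (n + 2) * cfDD α (n + 1) = - cfDD α n
  | 0 => by
      have h0 : cfTail α 0 = α := rfl
      have hF0 : 0 < Int.fract α := by have := fract_pos hα 0; rwa [h0] at this
      have hF1 : 0 < Int.fract (cfTail α 1) := fract_pos hα 1
      have ht1 : cfTail α 1 = (Int.fract α)⁻¹ := rfl
      have ht2 : cfTail α 2 = (Int.fract (cfTail α 1))⁻¹ := rfl
      rw [ht1] at hF1
      have a0r : ((⌊α⌋ : ℤ) : ℝ) = α - Int.fract α := by linarith [Int.self_sub_floor α]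
      have a1r : ((⌊(Int.fract α)⁻¹⌋ : ℤ) : ℝ)
          = (Int.fract α)⁻¹ - Int.fract ((Int.fract α)⁻¹) := by
        linarith [Int.self_sub_floor ((Int.fract α)⁻¹)]
      show cfTail α 2 * cfDD α 1 = - cfDD α 0
      simp only [cfDD, cfNum, cfDen, cfDigit, ht2, ht1, h0]
      push_cast
      rw [a0r, a1r]
      generalize hF : Int.fract α = F at hF0 hF1 ⊢
      generalize hG : Int.fract (F⁻¹) = G at hF1 ⊢
      field_simp
      ring
  | n + 1 => by
      have ih := cfD_rel hα n
      have hrec : cfDD α (n + 2) = (cfDigit α (n + 2) : ℝ) * cfDD α (n + 1) + cfDD α n := by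
        show (((cfDigit α (n + 2) * cfDen α (n + 1) + cfDen α n : ℤ) : ℝ) * α -
          ((cfDigit α (n + 2) * cfNum α (n + 1) + cfNum α n : ℤ) : ℝ)) = _
        push_cast
        simp only [cfDD]
        ring
      have hfr : Int.fract (cfTail α (n + 2)) = cfTail α (n + 2) - (cfDigit α (n + 2) : ℝ) := by
        rw [cfDigit]; linarith [Int.self_sub_floor (cfTail α (n + 2))]
      have ht3 : cfTail α (n + 3) = (Int.fract (cfTail α (n + 2)))⁻¹ := rfl
      have hpos : 0 < Int.fract (cfTail α (n + 2)) := fract_pos hα (n + 2)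
      have hDn : cfDD α n = -(cfTail α (n + 2) * cfDD α (n + 1)) := by linarith
      have hC : cfDD α (n + 2) = - (Int.fract (cfTail α (n + 2)) * cfDD α (n + 1)) := by
        rw [hrec, hDn, hfr]; ring
      show cfTail α (n + 3) * cfDD α (n + 2) = - cfDD α (n + 1)
      rw [ht3, hC]
      generalize hG : Int.fract (cfTail α (n + 2)) = G at hpos ⊢
      field_simp

lemma cfD_eq (hα : Irrational α) (n : ℕ) :
    ((cfDen α (n + 1) : ℝ) * cfTail α (n + 2) + (cfDen α n : ℝ)) * cfDD α (n + 1) =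
      (-1) ^ (n + 1) := by
  have h1 := cfD_rel hα n
  have h2 : (cfNum α (n + 1) : ℝ) * (cfDen α n : ℝ) -
      (cfNum α n : ℝ) * (cfDen α (n + 1) : ℝ) = (-1) ^ n := by
    exact_mod_cast det hα n
  simp only [cfDD] at *
  rw [pow_succ]
  linear_combination (cfDen α (n + 1) : ℝ) * h1 - h2

lemma den_real_pos (hα : Irrational α) (n : ℕ) :
    0 < (cfDen α (n + 1) : ℝ) * cfTail α (n + 2) + (cfDen α n : ℝ) := by
  have h1 : (1 : ℝ) ≤ (cfDen α (n + 1) : ℝ) := by exact_mod_cast den_ge_one hα (n + 1)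
  have h2 : (1 : ℝ) ≤ (cfDen α n : ℝ) := by exact_mod_cast den_ge_one hα n
  nlinarith [tail_gt_one hα (n + 1)]

lemma cfD_abs (hα : Irrational α) (n : ℕ) :
    |cfDD α (n + 1)| = ((cfDen α (n + 1) : ℝ) * cfTail α (n + 2) + (cfDen α n : ℝ))⁻¹ := by
  have he := cfD_eq hα n
  have hd := den_real_pos hα n
  refine eq_inv_of_mul_eq_one_left ?_
  have h : |((cfDen α (n + 1) : ℝ) * cfTail α (n + 2) + (cfDen α n : ℝ)) * cfDD α (n + 1)| = 1 := by
    rw [he, abs_pow]; simp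
  rwa [abs_mul, abs_of_pos hd, mul_comm] at h


lemma psi2_nonneg (α : ℝ) (t : ℝ) : 0 ≤ psi2 α t := by
  apply Real.sInf_nonneg
  rintro x ⟨p, q, _, _, _, rfl⟩
  exact abs_nonneg _

lemma psi2_le (hα : Irrational α) (k : ℕ) :
    ((2 * cfDen α (k + 1) : ℤ) : ℝ) * psi2 α ((2 * cfDen α (k + 1) : ℤ) : ℝ) ≤
      4 * (cfDen α (k + 1) : ℝ) /
        ((cfDen α (k + 1) : ℝ) * cfTail α (k + 2) + (cfDen α k : ℝ)) := by
  have hq1 : (1 : ℤ) ≤ cfDen α (k + 1) := den_ge_one hα (k + 1)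
  have hQ1 : (1 : ℤ) ≤ 2 * cfDen α (k + 1) := by omega
  have hne : ∀ n : ℕ,
      ((2 * cfNum α (k + 1) : ℤ), (2 * cfDen α (k + 1) : ℤ)) ≠ (cfNum α n, cfDen α n) := by
    intro n
    match n with
    | 0 =>
        intro h
        have h2 := congrArg Prod.snd h
        simp only [cfDen] at h2
        omega
    | j + 1 =>
        intro h
        have h1 := congrArg Prod.fst h
        have h2 := congrArg Prod.snd h
        simp only at h1 h2
        have hd := det hα j
        rw [← h1, ← h2] at hd
        have hdvd : (2 : ℤ) ∣ (-1) ^ j := by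
          rw [← hd]
          exact ⟨cfNum α (k + 1) * cfDen α j - cfNum α j * cfDen α (k + 1), by ring⟩
        rcases Nat.even_or_odd j with he | ho
        · rw [he.neg_one_pow] at hdvd; norm_num at hdvd
        · rw [ho.neg_one_pow] at hdvd
          rw [Int.dvd_neg] at hdvd; norm_num at hdvd
  have hmem : |((2 * cfDen α (k + 1) : ℤ) : ℝ) * α - ((2 * cfNum α (k + 1) : ℤ) : ℝ)| ∈
      { x : ℝ | ∃ p q : ℤ, 1 ≤ q ∧ (q : ℝ) ≤ ((2 * cfDen α (k + 1) : ℤ) : ℝ) ∧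
        (∀ n : ℕ, (p, q) ≠ (cfNum α n, cfDen α n)) ∧ x = |(q : ℝ) * α - (p : ℝ)| } :=
    ⟨2 * cfNum α (k + 1), 2 * cfDen α (k + 1), hQ1, le_refl _, hne, rfl⟩
  have hbdd : BddBelow { x : ℝ | ∃ p q : ℤ, 1 ≤ q ∧ (q : ℝ) ≤ ((2 * cfDen α (k + 1) : ℤ) : ℝ) ∧
      (∀ n : ℕ, (p, q) ≠ (cfNum α n, cfDen α n)) ∧ x = |(q : ℝ) * α - (p : ℝ)| } := by
    refine ⟨0, ?_⟩
    rintro x ⟨p, q, _, _, _, rfl⟩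
    exact abs_nonneg _
  have hle : psi2 α ((2 * cfDen α (k + 1) : ℤ) : ℝ) ≤
      |((2 * cfDen α (k + 1) : ℤ) : ℝ) * α - ((2 * cfNum α (k + 1) : ℤ) : ℝ)| :=
    csInf_le hbdd hmem
  have ht0 : (0 : ℝ) ≤ ((2 * cfDen α (k + 1) : ℤ) : ℝ) := by
    have h : (1 : ℝ) ≤ (cfDen α (k + 1) : ℝ) := by exact_mod_cast hq1
    push_cast
    linarith
  have habs : |((2 * cfDen α (k + 1) : ℤ) : ℝ) * α - ((2 * cfNum α (k + 1) : ℤ) : ℝ)| =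
      2 * |cfDD α (k + 1)| := by
    have he : ((2 * cfDen α (k + 1) : ℤ) : ℝ) * α - ((2 * cfNum α (k + 1) : ℤ) : ℝ) =
        2 * cfDD α (k + 1) := by
      simp only [cfDD]; push_cast; ring
    rw [he, abs_mul, abs_two]
  calc ((2 * cfDen α (k + 1) : ℤ) : ℝ) * psi2 α ((2 * cfDen α (k + 1) : ℤ) : ℝ)
      ≤ ((2 * cfDen α (k + 1) : ℤ) : ℝ) *
        |((2 * cfDen α (k + 1) : ℤ) : ℝ) * α - ((2 * cfNum α (k + 1) : ℤ) : ℝ)| :=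
        mul_le_mul_of_nonneg_left hle ht0
    _ = 4 * (cfDen α (k + 1) : ℝ) /
        ((cfDen α (k + 1) : ℝ) * cfTail α (k + 2) + (cfDen α k : ℝ)) := by
        rw [habs, cfD_abs hα k, div_eq_mul_inv]
        push_cast
        ring

end CF16Aux

/-- If `α` is irrational, equivalent neither to `(1+√5)/2` nor to `(1+√17)/2`,
with `aₙ ∈ {1, 3}` for infinitely many `n`, and for infinitely many `n` one has the
pattern `1, 1, 3, 1, 1, 1`, then `𝔨(α) ≤ 180/187`. -/
theorem stmt_16 (α : ℝ) (hα : Irrational α)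
    (h5 : ¬ CFEquiv α ((1 + Real.sqrt 5) / 2))
    (h17 : ¬ CFEquiv α ((1 + Real.sqrt 17) / 2))
    (hmem : ∃ᶠ n in atTop, cfDigit α n = 1 ∨ cfDigit α n = 3)
    (hpat : ∃ᶠ n in atTop,
      cfDigit α n = 1 ∧ cfDigit α (n + 1) = 1 ∧ cfDigit α (n + 2) = 3 ∧
      cfDigit α (n + 3) = 1 ∧ cfDigit α (n + 4) = 1 ∧ cfDigit α (n + 5) = 1) :
    kConst α ≤ 180 / 187 := by
  classical
  have hfreq : ∃ᶠ t in atTop, t * psi2 α t ≤ 180 / 187 := by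
    rw [frequently_atTop]
    intro b
    obtain ⟨N, hN⟩ := exists_nat_ge b
    have use_k : ∀ k : ℕ, N ≤ k →
        4 * (cfDen α (k + 1) : ℝ) /
          ((cfDen α (k + 1) : ℝ) * cfTail α (k + 2) + (cfDen α k : ℝ)) ≤ 180 / 187 →
        ∃ t ≥ b, t * psi2 α t ≤ 180 / 187 := by
      intro k hk hbound
      refine ⟨((2 * cfDen α (k + 1) : ℤ) : ℝ), ?_, le_trans (CF16Aux.psi2_le hα k) hbound⟩
      have h1 : ((k : ℝ) + 1) ≤ (cfDen α (k + 1) : ℝ) := by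
        exact_mod_cast CF16Aux.den_ge_idx hα (k + 1)
      have h2 : (N : ℝ) ≤ (k : ℝ) := by exact_mod_cast hk
      have h3 : (1 : ℝ) ≤ (cfDen α (k + 1) : ℝ) := by
        exact_mod_cast CF16Aux.den_ge_one hα (k + 1)
      push_cast
      linarith
    by_cases hc5 : ∃ᶠ j in atTop, 5 ≤ cfDigit α j
    · obtain ⟨j, hj, hj5⟩ := frequently_atTop.mp hc5 (N + 2)
      obtain ⟨k, rfl⟩ : ∃ k, j = k + 2 := ⟨j - 2, by omega⟩
      apply use_k k (by omega)
      have ht : (5 : ℝ) < cfTail α (k + 2) :=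
        lt_of_le_of_lt (by exact_mod_cast hj5) (CF16Aux.digit_lt_tail hα (k + 2))
      have hq1 : (1 : ℝ) ≤ (cfDen α (k + 1) : ℝ) := by
        exact_mod_cast CF16Aux.den_ge_one hα (k + 1)
      have hq0 : (1 : ℝ) ≤ (cfDen α k : ℝ) := by exact_mod_cast CF16Aux.den_ge_one hα k
      rw [div_le_div_iff₀ (CF16Aux.den_real_pos hα k) (by norm_num)]
      nlinarith
    · have hcap4 : ∀ᶠ j in atTop, cfDigit α j ≤ 4 := by
        rw [not_frequently] at hc5
        filter_upwards [hc5] with j hj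
        omega
      obtain ⟨N1, hN1⟩ := eventually_atTop.mp hcap4
      by_cases hc4 : ∃ᶠ j in atTop, 4 ≤ cfDigit α j
      · obtain ⟨j, hj, hj4⟩ := frequently_atTop.mp hc4 (N + N1 + 3)
        obtain ⟨k, rfl⟩ : ∃ k, j = k + 3 := ⟨j - 3, by omega⟩
        apply use_k (k + 1) (by omega)
        have hd4 : (4 : ℝ) ≤ (cfDigit α (k + 3) : ℝ) := by exact_mod_cast hj4
        have hcap : cfDigit α (k + 4) ≤ 4 := hN1 (k + 4) (by omega)
        have ht4a : 1 < cfTail α (k + 4) := CF16Aux.tail_gt_one hα (k + 3)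
        have ht4b : cfTail α (k + 4) < 5 := by
          have h1 := CF16Aux.tail_lt_digit_add_one (α := α) (k + 4)
          have h2 : (cfDigit α (k + 4) : ℝ) ≤ 4 := by exact_mod_cast hcap
          linarith
        have hte : cfTail α (k + 3) = (cfDigit α (k + 3) : ℝ) + (cfTail α (k + 4))⁻¹ :=
          CF16Aux.tail_eq hα (k + 3)
        have hc4i : cfTail α (k + 4) * (cfTail α (k + 4))⁻¹ = 1 :=
          mul_inv_cancel₀ (by linarith)
        have htail : (21 : ℝ) / 5 < cfTail α (k + 3) := by
          rw [hte]
          have hpos : 0 < (cfTail α (k + 4))⁻¹ := by positivity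
          nlinarith
        have hq2 : (1 : ℝ) ≤ (cfDen α (k + 2) : ℝ) := by
          exact_mod_cast CF16Aux.den_ge_one hα (k + 2)
        have hq1 : (1 : ℝ) ≤ (cfDen α (k + 1) : ℝ) := by
          exact_mod_cast CF16Aux.den_ge_one hα (k + 1)
        rw [div_le_div_iff₀ (CF16Aux.den_real_pos hα (k + 1)) (by norm_num)]
        have hp : (cfDen α (k + 2) : ℝ) * (21 / 5) ≤
            (cfDen α (k + 2) : ℝ) * cfTail α (k + 3) :=
          mul_le_mul_of_nonneg_left htail.le (by linarith)
        linarith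
      · have hcap3 : ∀ᶠ j in atTop, cfDigit α j ≤ 3 := by
          rw [not_frequently] at hc4
          filter_upwards [hc4] with j hj
          omega
        obtain ⟨N2, hN2⟩ := eventually_atTop.mp hcap3
        obtain ⟨n, hn, hpat6⟩ := frequently_atTop.mp hpat (N + N2 + 4)
        obtain ⟨k, rfl⟩ : ∃ k, n = k + 3 := ⟨n - 3, by omega⟩
        apply use_k (k + 3) (by omega)
        obtain ⟨p1, p2, p3, p4, p5, p6⟩ := hpat6
        have p1' : cfDigit α (k + 3) = 1 := p1
        have p2' : cfDigit α (k + 4) = 1 := p2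
        have p3' : cfDigit α (k + 5) = 3 := p3
        have p4' : cfDigit α (k + 6) = 1 := p4
        have p5' : cfDigit α (k + 7) = 1 := p5
        have p6' : cfDigit α (k + 8) = 1 := p6
        -- tail bounds
        have g9 : 1 < cfTail α (k + 9) := CF16Aux.tail_gt_one hα (k + 8)
        have e8 : cfTail α (k + 8) = 1 + (cfTail α (k + 9))⁻¹ := by
          have h := CF16Aux.tail_eq hα (k + 8)
          rw [p6'] at h
          simpa using h
        have e7 : cfTail α (k + 7) = 1 + (cfTail α (k + 8))⁻¹ := by
          have h := CF16Aux.tail_eq hα (k + 7)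
          rw [p5'] at h
          simpa using h
        have e6 : cfTail α (k + 6) = 1 + (cfTail α (k + 7))⁻¹ := by
          have h := CF16Aux.tail_eq hα (k + 6)
          rw [p4'] at h
          simpa using h
        have e5 : cfTail α (k + 5) = 3 + (cfTail α (k + 6))⁻¹ := by
          have h := CF16Aux.tail_eq hα (k + 5)
          rw [p3'] at h
          simpa using h
        have c9 : cfTail α (k + 9) * (cfTail α (k + 9))⁻¹ = 1 :=
          mul_inv_cancel₀ (by linarith)
        have h8b : cfTail α (k + 8) < 2 := by
          rw [e8]
          nlinarith [c9, g9]
        have h8a : 1 < cfTail α (k + 8) := by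
          rw [e8]
          have : 0 < (cfTail α (k + 9))⁻¹ := by positivity
          linarith
        have c8 : cfTail α (k + 8) * (cfTail α (k + 8))⁻¹ = 1 :=
          mul_inv_cancel₀ (by linarith)
        have h7a : (3 : ℝ) / 2 < cfTail α (k + 7) := by
          rw [e7]
          nlinarith [c8, h8b, h8a]
        have c7 : cfTail α (k + 7) * (cfTail α (k + 7))⁻¹ = 1 :=
          mul_inv_cancel₀ (by linarith)
        have h6b : cfTail α (k + 6) < 5 / 3 := by
          rw [e6]
          nlinarith [c7, h7a]
        have h6a : 1 < cfTail α (k + 6) := by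
          rw [e6]
          have : 0 < (cfTail α (k + 7))⁻¹ := by positivity
          linarith
        have c6 : cfTail α (k + 6) * (cfTail α (k + 6))⁻¹ = 1 :=
          mul_inv_cancel₀ (by linarith)
        have h5a : (18 : ℝ) / 5 < cfTail α (k + 5) := by
          rw [e5]
          nlinarith [c6, h6b, h6a]
        -- denominator relations
        have hv : cfDen α (k + 4) = cfDen α (k + 3) + cfDen α (k + 2) := by
          show cfDigit α (k + 4) * cfDen α (k + 3) + cfDen α (k + 2) = _
          rw [p2']; ring
        have hu : cfDen α (k + 3) = cfDen α (k + 2) + cfDen α (k + 1) := by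
          show cfDigit α (k + 3) * cfDen α (k + 2) + cfDen α (k + 1) = _
          rw [p1']; ring
        have hcapw : cfDigit α (k + 2) ≤ 3 := hN2 (k + 2) (by omega)
        have hwz : cfDen α (k + 2) ≤ 4 * cfDen α (k + 1) := by
          have hrec : cfDen α (k + 2) = cfDigit α (k + 2) * cfDen α (k + 1) + cfDen α k := rfl
          have hm : cfDen α k ≤ cfDen α (k + 1) := CF16Aux.den_mono hα k
          have h1 : (1 : ℤ) ≤ cfDen α (k + 1) := CF16Aux.den_ge_one hα (k + 1)
          rw [hrec]
          nlinarith
        have h95 : 5 * cfDen α (k + 4) ≤ 9 * cfDen α (k + 3) := by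
          have h1 : (1 : ℤ) ≤ cfDen α (k + 1) := CF16Aux.den_ge_one hα (k + 1)
          omega
        -- final bound
        have hvr : (1 : ℝ) ≤ (cfDen α (k + 4) : ℝ) := by
          exact_mod_cast CF16Aux.den_ge_one hα (k + 4)
        have hur : (1 : ℝ) ≤ (cfDen α (k + 3) : ℝ) := by
          exact_mod_cast CF16Aux.den_ge_one hα (k + 3)
        have h95r : 5 * (cfDen α (k + 4) : ℝ) ≤ 9 * (cfDen α (k + 3) : ℝ) := by
          exact_mod_cast h95
        rw [div_le_div_iff₀ (CF16Aux.den_real_pos hα (k + 3)) (by norm_num)]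
        have hp : (cfDen α (k + 4) : ℝ) * (18 / 5) ≤
            (cfDen α (k + 4) : ℝ) * cfTail α (k + 5) :=
          mul_le_mul_of_nonneg_left h5a.le (by linarith)
        linarith
  have hb : IsBoundedUnder (· ≥ ·) atTop (fun t : ℝ => t * psi2 α t) := by
    refine ⟨0, ?_⟩
    rw [eventually_map]
    filter_upwards [eventually_ge_atTop (0 : ℝ)] with t ht
    exact mul_nonneg ht (CF16Aux.psi2_nonneg α t)
  show liminf (fun t : ℝ => t * psi2 α t) atTop ≤ 180 / 187
  exact liminf_le_of_frequently_le hfreq hb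
end
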